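/- The function h(x) = 1/x − 1/(eˣ − 1) is strictly decreasing on (0, ∞), with h(x) → 1/2 as x → 0+ and h(x) → 0 as x → ∞. -/

import Mathlib

open MeasureTheory Set Filter Real

lemma expm1_pos {x : ℝ} (hx : 0 < x) : 0 < Real.exp x - 1 := by
  nlinarith [Real.add_one_le_exp x]

lemma hasDerivAt_h {x : ℝ} (hx : 0 < x) :
    HasDerivAt (fun x : ℝ => 1 / x - 1 / (Real.exp x - 1))
      (Real.exp x / (Real.exp x - 1) ^ 2 - 1 / x ^ 2) x := by
  have h1 : HasDerivAt (fun x : ℝ => 1 / x) (-(1 / x ^ 2)) x := by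
    simpa [one_div] using hasDerivAt_inv hx.ne'
  have h2 : HasDerivAt (fun x : ℝ => Real.exp x - 1) (Real.exp x) x :=
    (Real.hasDerivAt_exp x).sub_const 1
  have h3 := h2.inv (expm1_pos hx).ne'
  have h4 := h1.sub (by simpa [one_div, Pi.inv_def] using h3 :
    HasDerivAt (fun x : ℝ => 1 / (Real.exp x - 1)) (-Real.exp x / (Real.exp x - 1) ^ 2) x)
  exact h4.congr_deriv (by ring)

lemma my_deriv_neg {x : ℝ} (hx : 0 < x) :
    Real.exp x / (Real.exp x - 1) ^ 2 - 1 / x ^ 2 < 0 := by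
  have he := expm1_pos hx
  have e1 : Real.exp (x/2) * Real.exp (x/2) = Real.exp x := by
    rw [← Real.exp_add]; ring_nf
  have e2 : Real.exp x - 1 = 2 * Real.exp (x/2) * Real.sinh (x/2) := by
    rw [Real.sinh_eq, ← e1, Real.exp_neg]
    field_simp
  have hs : x/2 < Real.sinh (x/2) := Real.self_lt_sinh_iff.mpr (by positivity)
  have key : x ^ 2 * Real.exp x < (Real.exp x - 1) ^ 2 := by
    nlinarith [hs, e1, e2, Real.exp_pos (x/2), hx,
      mul_pos (sub_pos.mpr hs) (by linarith : (0:ℝ) < Real.sinh (x/2) + x/2),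
      sq_nonneg (Real.exp (x/2))]
  rw [sub_neg, div_lt_div_iff₀ (by positivity) (by positivity)]
  nlinarith [key]

theorem one_div_sub_one_div_expm1_strictAnti :
    StrictAntiOn (fun x : ℝ => 1 / x - 1 / (Real.exp x - 1)) (Set.Ioi 0) ∧
    Tendsto (fun x : ℝ => 1 / x - 1 / (Real.exp x - 1))
      (nhdsWithin 0 (Set.Ioi 0)) (nhds (1 / 2)) ∧
    Tendsto (fun x : ℝ => 1 / x - 1 / (Real.exp x - 1)) atTop (nhds 0) := by
  refine ⟨?_, ?_, ?_⟩
  · apply strictAntiOn_of_deriv_neg (convex_Ioi 0)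
    · intro x hx
      exact ((hasDerivAt_h (mem_Ioi.mp hx)).differentiableAt).continuousAt.continuousWithinAt
    · intro x hx
      rw [interior_Ioi] at hx
      rw [(hasDerivAt_h (mem_Ioi.mp hx)).deriv]
      exact my_deriv_neg (mem_Ioi.mp hx)
  · -- limit at 0+
    have lim1 : Tendsto (fun x : ℝ => (Real.exp x - 1) / x) (nhdsWithin 0 (Set.Ioi 0)) (nhds 1) := by
      have h0 : HasDerivAt Real.exp 1 0 := by simpa using Real.hasDerivAt_exp 0
      rw [hasDerivAt_iff_tendsto_slope] at h0
      have h2 : Tendsto (slope Real.exp 0) (nhdsWithin 0 (Set.Ioi 0)) (nhds 1) :=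
        h0.mono_left (nhdsWithin_mono 0 (fun x hx => ne_of_gt hx))
      refine h2.congr' ?_
      filter_upwards [self_mem_nhdsWithin] with x hx
      rw [slope_def_field, Real.exp_zero]
      field_simp
      rw [sub_zero]
    have lim2 : Tendsto (fun x : ℝ => (Real.exp x - 1 - x) / x ^ 2)
        (nhdsWithin 0 (Set.Ioi 0)) (nhds (1 / 2)) := by
      apply HasDerivAt.lhopital_zero_nhdsGT (f' := fun x : ℝ => Real.exp x - 1)
        (g' := fun x : ℝ => 2 * x)
      · filter_upwards with x
        exact ((Real.hasDerivAt_exp x).sub_const 1).sub (hasDerivAt_id x)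
      · filter_upwards with x
        simpa using (hasDerivAt_pow 2 x)
      · filter_upwards [self_mem_nhdsWithin] with x hx
        have hx' : 0 < x := hx
        positivity
      · have h : Tendsto (fun x : ℝ => Real.exp x - 1 - x) (nhds 0) (nhds 0) := by
          have hc : Continuous (fun x : ℝ => Real.exp x - 1 - x) := by continuity
          simpa using hc.tendsto 0
        exact h.mono_left nhdsWithin_le_nhds
      · have h : Tendsto (fun x : ℝ => x ^ 2) (nhds (0:ℝ)) (nhds 0) := by
          simpa using (continuous_pow 2 (M := ℝ)).tendsto 0
        exact h.mono_left nhdsWithin_le_nhds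
      · have heq : ∀ᶠ x in nhdsWithin (0:ℝ) (Set.Ioi 0),
            (1/2 : ℝ) * ((Real.exp x - 1) / x) = (Real.exp x - 1) / (2 * x) := by
          filter_upwards [self_mem_nhdsWithin] with x hx
          have : x ≠ 0 := ne_of_gt hx
          field_simp
        refine (tendsto_congr' heq).mp ?_
        simpa using lim1.const_mul (1/2 : ℝ)
    have lim3 : Tendsto (fun x : ℝ => x / (Real.exp x - 1)) (nhdsWithin 0 (Set.Ioi 0)) (nhds 1) := by
      have := lim1.inv₀ one_ne_zero
      simp only [inv_one] at this
      refine this.congr' ?_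
      filter_upwards [self_mem_nhdsWithin] with x hx
      rw [inv_div]
    have hmul := lim2.mul lim3
    rw [mul_one] at hmul
    refine hmul.congr' ?_
    filter_upwards [self_mem_nhdsWithin] with x hx
    have hx0 : x ≠ 0 := ne_of_gt hx
    have he : Real.exp x - 1 ≠ 0 := (expm1_pos hx).ne'
    field_simp
  · -- limit at ∞
    have h1 : Tendsto (fun x : ℝ => 1 / x) atTop (nhds 0) := by
      simpa [one_div] using tendsto_inv_atTop_zero (𝕜 := ℝ)
    have h2 : Tendsto (fun x : ℝ => 1 / (Real.exp x - 1)) atTop (nhds 0) := by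
      have ht : Tendsto (fun x : ℝ => Real.exp x - 1) atTop atTop :=
        Real.tendsto_exp_atTop.atTop_add tendsto_const_nhds
      simpa [one_div, Pi.inv_def] using ht.inv_tendsto_atTop
    simpa using h1.sub h2
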